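/- For every integer k ≥ 0, the family of polynomials (T'^{k−j}·T''^{i}·Ψ_{j−i}) indexed by pairs (i,j) with 0 ≤ i ≤ j ≤ k is a ℂ-basis of the homogeneous component of degree k of ℂ[T,T',T''] (each variable having degree 1). -/

import Mathlib

open MvPolynomial

/-- `Ψ₀ = 1`, `Ψ₁ = T`, `Ψ_{i+2} = T·Ψ_{i+1} − T'·T''·Ψ_i`, where `T = X 0`, `T' = X 1`,
`T'' = X 2`. -/
noncomputable def Psi : ℕ → MvPolynomial (Fin 3) ℂ
  | 0 => 1
  | 1 => X 0
  | (n + 2) => X 0 * Psi (n + 1) - X 1 * X 2 * Psi n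

lemma psi_homog (n : ℕ) : (Psi n).IsHomogeneous n := by
  induction n using Nat.strong_induction_on with
  | _ n ih =>
    match n with
    | 0 => exact isHomogeneous_one _ _
    | 1 => exact isHomogeneous_X _ _
    | (m+2) =>
      rw [Psi]
      have h1 : ((X 0 : MvPolynomial (Fin 3) ℂ) * Psi (m+1)).IsHomogeneous (m+2) := by
        have := (isHomogeneous_X ℂ (0 : Fin 3)).mul (ih (m+1) (by omega))
        convert this using 1; omega
      have h0 : ((X 1 : MvPolynomial (Fin 3) ℂ) * X 2 * Psi m).IsHomogeneous (m+2) := by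
        have := ((isHomogeneous_X ℂ (1 : Fin 3)).mul (isHomogeneous_X ℂ (2 : Fin 3))).mul
          (ih m (by omega))
        convert this using 1; omega
      exact h1.sub h0

lemma psi_key (a : ℕ) : ∀ b c : ℕ,
    (X 0:MvPolynomial (Fin 3) ℂ)^a * X 1^b * X 2^c - X 1^b * X 2^c * Psi a ∈
      Submodule.span ℂ {q : MvPolynomial (Fin 3) ℂ |
        ∃ a' b' c', a' < a ∧ a' + b' + c' = a + b + c ∧ q = X 0^a' * X 1^b' * X 2^c'} := by
  induction a using Nat.strong_induction_on with
  | _ a ih =>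
    match a with
    | 0 => intro b c; rw [Psi]; simp
    | 1 =>
      intro b c; rw [Psi]
      rw [show (X 0:MvPolynomial (Fin 3) ℂ)^1 * X 1^b * X 2^c - X 1^b * X 2^c * X 0 = 0 by ring]
      simp
    | (m+2) =>
      intro b c
      have key : (X 0:MvPolynomial (Fin 3) ℂ)^(m+2)*X 1^b*X 2^c - X 1^b*X 2^c * Psi (m+2)
          = X 0 * ((X 0:MvPolynomial (Fin 3) ℂ)^(m+1)*X 1^b*X 2^c - X 1^b*X 2^c*Psi (m+1))
            + X 0^m * X 1^(b+1)*X 2^(c+1)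
            - ((X 0:MvPolynomial (Fin 3) ℂ)^m*X 1^(b+1)*X 2^(c+1)
                - X 1^(b+1)*X 2^(c+1) * Psi m) := by
        rw [Psi]; ring
      rw [key]
      refine sub_mem (add_mem ?_ ?_) ?_
      · have hA := ih (m+1) (by omega) b c
        have : X 0 * ((X 0:MvPolynomial (Fin 3) ℂ)^(m+1)*X 1^b*X 2^c - X 1^b*X 2^c*Psi (m+1)) ∈
            Submodule.map (LinearMap.mulLeft ℂ (X 0 : MvPolynomial (Fin 3) ℂ))
              (Submodule.span ℂ {q : MvPolynomial (Fin 3) ℂ |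
                ∃ a' b' c', a' < m+1 ∧ a' + b' + c' = m+1 + b + c ∧
                  q = X 0^a' * X 1^b' * X 2^c'}) := ⟨_, hA, rfl⟩
        rw [Submodule.map_span] at this
        refine Submodule.span_mono ?_ this
        rintro _ ⟨q, ⟨a', b', c', h1, h2, rfl⟩, rfl⟩
        exact ⟨a'+1, b', c', by omega, by omega, by simp [LinearMap.mulLeft_apply]; ring⟩
      · exact Submodule.subset_span ⟨m, b+1, c+1, by omega, by omega, rfl⟩
      · refine Submodule.span_mono ?_ (ih m (by omega) (b+1) (c+1))
        rintro q ⟨a', b', c', h1, h2, rfl⟩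
        exact ⟨a', b', c', by omega, by omega, rfl⟩

lemma span_mem (k : ℕ) : ∀ a b c : ℕ, a + b + c = k →
    (X 0:MvPolynomial (Fin 3) ℂ)^a * X 1^b * X 2^c ∈
      Submodule.span ℂ (Set.range (fun p : {p : ℕ × ℕ // p.1 ≤ p.2 ∧ p.2 ≤ k} =>
        X 1 ^ (k - p.1.2) * X 2 ^ p.1.1 * Psi (p.1.2 - p.1.1))) := by
  intro a
  induction a using Nat.strong_induction_on with
  | _ a ih =>
    intro b c hk
    have hmem : (X 1:MvPolynomial (Fin 3) ℂ)^b * X 2^c * Psi a ∈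
        Submodule.span ℂ (Set.range (fun p : {p : ℕ × ℕ // p.1 ≤ p.2 ∧ p.2 ≤ k} =>
          X 1 ^ (k - p.1.2) * X 2 ^ p.1.1 * Psi (p.1.2 - p.1.1))) := by
      refine Submodule.subset_span ⟨⟨(c, a+c), by omega, by omega⟩, ?_⟩
      simp only
      rw [show k - (a + c) = b by omega, show a + c - c = a by omega]
    have hdiff : (X 0:MvPolynomial (Fin 3) ℂ)^a * X 1^b * X 2^c - X 1^b * X 2^c * Psi a ∈
        Submodule.span ℂ (Set.range (fun p : {p : ℕ × ℕ // p.1 ≤ p.2 ∧ p.2 ≤ k} =>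
          X 1 ^ (k - p.1.2) * X 2 ^ p.1.1 * Psi (p.1.2 - p.1.1))) := by
      refine Submodule.span_le.mpr ?_ (psi_key a b c)
      rintro q ⟨a', b', c', h1, h2, rfl⟩
      exact ih a' h1 b' c' (by omega)
    simpa using add_mem hdiff hmem

lemma fin3_decomp (d : Fin 3 →₀ ℕ) :
    d = Finsupp.single 0 (d 0) + Finsupp.single 1 (d 1) + Finsupp.single 2 (d 2) := by
  ext i; fin_cases i <;> simp [Finsupp.single_apply]

lemma mono_abc (a b c : ℕ) :
    (monomial (Finsupp.single 0 a + Finsupp.single 1 b + Finsupp.single 2 c) (1:ℂ) :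
      MvPolynomial (Fin 3) ℂ) = X 0 ^ a * X 1 ^ b * X 2 ^ c := by
  simp [X_pow_eq_monomial, monomial_mul]

lemma monomial_eq (d : Fin 3 →₀ ℕ) (r : ℂ) :
    (monomial d r : MvPolynomial (Fin 3) ℂ)
      = r • (X 0 ^ (d 0) * X 1 ^ (d 1) * X 2 ^ (d 2)) := by
  rw [← mono_abc, ← fin3_decomp d, smul_monomial, smul_eq_mul, mul_one]

/-- the family `(T'^{k−j}·T''^{i}·Ψ_{j−i})_{0 ≤ i ≤ j ≤ k}` is a `ℂ`-basis of
the degree-`k` homogeneous component of `ℂ[T,T',T'']`. -/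
theorem stmt6 (k : ℕ) :
    LinearIndependent ℂ (fun p : {p : ℕ × ℕ // p.1 ≤ p.2 ∧ p.2 ≤ k} =>
        X 1 ^ (k - p.1.2) * X 2 ^ p.1.1 * Psi (p.1.2 - p.1.1)) ∧
    Submodule.span ℂ (Set.range (fun p : {p : ℕ × ℕ // p.1 ≤ p.2 ∧ p.2 ≤ k} =>
        X 1 ^ (k - p.1.2) * X 2 ^ p.1.1 * Psi (p.1.2 - p.1.1))) =
      homogeneousSubmodule (Fin 3) ℂ k := by
    classical
  set f : {p : ℕ × ℕ // p.1 ≤ p.2 ∧ p.2 ≤ k} → MvPolynomial (Fin 3) ℂ :=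
    fun p => X 1 ^ (k - p.1.2) * X 2 ^ p.1.1 * Psi (p.1.2 - p.1.1) with hfdef
  have hspan : Submodule.span ℂ (Set.range f) = homogeneousSubmodule (Fin 3) ℂ k := by
    apply le_antisymm
    · rw [Submodule.span_le]
      rintro _ ⟨⟨⟨i, j⟩, hij, hjk⟩, rfl⟩
      rw [SetLike.mem_coe, mem_homogeneousSubmodule]
      have h := (((isHomogeneous_X ℂ (1 : Fin 3)).pow (k - j)).mul
        ((isHomogeneous_X ℂ (2 : Fin 3)).pow i)).mul (psi_homog (j - i))
      convert h using 1
      omega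
    · intro q hq
      rw [mem_homogeneousSubmodule] at hq
      rw [← support_sum_monomial_coeff q]
      refine Submodule.sum_mem _ fun d hd => ?_
      have hsum : d 0 + d 1 + d 2 = k := by
        have h := hq (mem_support_iff.mp hd)
        rw [Finsupp.weight_apply, Finsupp.sum_fintype _ _ (by simp)] at h
        simpa [Fin.sum_univ_three] using h
      rw [monomial_eq]
      exact Submodule.smul_mem _ _ (span_mem k _ _ _ hsum)
  haveI : Fintype {p : ℕ × ℕ // p.1 ≤ p.2 ∧ p.2 ≤ k} :=
    Fintype.ofInjective (fun p => ((⟨p.1.1, Nat.lt_succ_of_le (le_trans p.2.1 p.2.2)⟩ : Fin (k+1)),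
        (⟨p.1.2, Nat.lt_succ_of_le p.2.2⟩ : Fin (k+1))))
      (by
        rintro ⟨⟨i, j⟩, h⟩ ⟨⟨i', j'⟩, h'⟩ he
        simp only [Prod.mk.injEq, Fin.mk.injEq] at he
        exact Subtype.ext (Prod.ext he.1 he.2))
  set ι : {p : ℕ × ℕ // p.1 ≤ p.2 ∧ p.2 ≤ k} → (Fin 3 →₀ ℕ) := fun p =>
    Finsupp.single 0 (p.1.2 - p.1.1) + Finsupp.single 1 (k - p.1.2) + Finsupp.single 2 p.1.1
    with hιdef
  have hι : Function.Injective ι := by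
    rintro ⟨⟨i, j⟩, hij, hjk⟩ ⟨⟨i', j'⟩, hij', hjk'⟩ he
    have e0 := DFunLike.congr_fun he (0 : Fin 3)
    have e1 := DFunLike.congr_fun he (1 : Fin 3)
    have e2 := DFunLike.congr_fun he (2 : Fin 3)
    simp [hιdef, Finsupp.single_apply] at e0 e1 e2
    have hi : i = i' := by omega
    have hj : j = j' := by omega
    subst hi; subst hj; rfl
  have hg : LinearIndependent ℂ
      (fun p : {p : ℕ × ℕ // p.1 ≤ p.2 ∧ p.2 ≤ k} =>
        (monomial (ι p) 1 : MvPolynomial (Fin 3) ℂ)) := by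
    have := (basisMonomials (Fin 3) ℂ).linearIndependent.comp ι hι
    rw [coe_basisMonomials] at this; exact this
  have hgW : ∀ p, (monomial (ι p) 1 : MvPolynomial (Fin 3) ℂ) ∈
      Submodule.span ℂ (Set.range f) := by
    rintro ⟨⟨i, j⟩, hij, hjk⟩
    rw [hιdef]
    simp only [mono_abc]
    exact span_mem k _ _ _ (by omega)
  set W := Submodule.span ℂ (Set.range f) with hWdef
  haveI : FiniteDimensional ℂ W := FiniteDimensional.span_of_finite ℂ (Set.finite_range f)
  set g' : {p : ℕ × ℕ // p.1 ≤ p.2 ∧ p.2 ≤ k} → W :=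
    fun p => ⟨monomial (ι p) 1, hgW p⟩ with hg'def
  have hg' : LinearIndependent ℂ g' := by
    apply LinearIndependent.of_comp W.subtype
    exact hg
  have hcard_le : Fintype.card {p : ℕ × ℕ // p.1 ≤ p.2 ∧ p.2 ≤ k} ≤
      Module.finrank ℂ W := hg'.fintype_card_le_finrank
  have hle : Module.finrank ℂ W ≤ Fintype.card {p : ℕ × ℕ // p.1 ≤ p.2 ∧ p.2 ≤ k} :=
    finrank_range_le_card f
  set f' : {p : ℕ × ℕ // p.1 ≤ p.2 ∧ p.2 ≤ k} → W :=
    fun p => ⟨f p, Submodule.subset_span ⟨p, rfl⟩⟩ with hf'def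
  have hmap : Submodule.map W.subtype (Submodule.span ℂ (Set.range f')) = W := by
    rw [Submodule.map_span]
    have himg : W.subtype '' Set.range f' = Set.range f := by
      ext x
      constructor
      · rintro ⟨y, ⟨p, rfl⟩, rfl⟩; exact ⟨p, rfl⟩
      · rintro ⟨p, rfl⟩; exact ⟨f' p, ⟨p, rfl⟩, rfl⟩
    rw [himg]
  have htop : Submodule.span ℂ (Set.range f') = ⊤ := by
    apply Submodule.map_injective_of_injective W.injective_subtype
    rw [hmap, Submodule.map_top, Submodule.range_subtype]
  have hcard_eq : Fintype.card {p : ℕ × ℕ // p.1 ≤ p.2 ∧ p.2 ≤ k} =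
      Module.finrank ℂ W := le_antisymm hcard_le hle
  have hf' : LinearIndependent ℂ f' :=
    linearIndependent_of_top_le_span_of_card_eq_finrank htop.ge hcard_eq
  have hfind : LinearIndependent ℂ f := hf'.map' W.subtype W.ker_subtype
  exact ⟨hfind, hspan⟩
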